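/- Let A be a unital C*-algebra, φ a positive tracial linear functional on A, p > 2 a real number, and W ∈ A with W ≥ 0. Then for all x, y ∈ A, |φ(x W y*)| ≤ φ(|x|^p)^{1/p} · φ(|y|^p)^{1/p} · φ(W^{p/(p-2)})^{(p-2)/p} (all quantities φ(|x|^p), φ(|y|^p), φ(W^{p/(p-2)}) are nonnegative reals). In particular, if φ(W^{p/(p-2)}) ≤ 1 then |φ(x W y*)| ≤ φ(|x|^p)^{1/p} φ(|y|^p)^{1/p}. -/

import Mathlib

open ComplexOrder
open Filter Topology
open scoped NNReal

section GenericReal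

/-- Natural-power dyadic bound for midpoint-log-convex nonnegative functions. -/
lemma dyadic_pow {F : ℝ → ℝ} (hnn : ∀ θ ∈ Set.Icc (0:ℝ) 1, 0 ≤ F θ)
    (hmid : ∀ θ₁ ∈ Set.Icc (0:ℝ) 1, ∀ θ₂ ∈ Set.Icc (0:ℝ) 1,
      F ((θ₁+θ₂)/2) ^ 2 ≤ F θ₁ * F θ₂) :
    ∀ N k : ℕ, k ≤ 2 ^ N →
      F ((k:ℝ)/2^N) ^ (2^N : ℕ) ≤ F 0 ^ (2^N - k) * F 1 ^ k := by
  have mem : ∀ N k : ℕ, k ≤ 2^N → ((k:ℝ)/2^N) ∈ Set.Icc (0:ℝ) 1 := by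
    intro N k hk
    constructor
    · positivity
    · rw [div_le_one (by positivity)]
      exact_mod_cast hk
  have hF0 : 0 ≤ F 0 := hnn _ (by norm_num)
  have hF1 : 0 ≤ F 1 := hnn _ (by norm_num)
  intro N
  induction N with
  | zero =>
    intro k hk
    interval_cases k <;> simp
  | succ N ih =>
    intro k hk
    have h2N : (2:ℕ)^(N+1) = 2 * 2^N := by ring
    rcases Nat.even_or_odd k with ⟨m, hm⟩ | ⟨m, hm⟩
    · -- k = m + m
      have hm2 : m ≤ 2^N := by omega
      have hθ : (k:ℝ)/2^(N+1) = (m:ℝ)/2^N := by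
        subst hm; push_cast; ring
      rw [hθ]
      rw [show ∀ x:ℝ, x ^ (2^(N+1):ℕ) = (x ^ (2^N:ℕ))^2 from fun x => by
        rw [← pow_mul, show (2:ℕ)^N*2 = 2^(N+1) by ring]]
      calc (F ((m:ℝ)/2^N) ^ (2^N : ℕ)) ^ 2 ≤ (F 0 ^ (2^N - m) * F 1 ^ m) ^ 2 := by
            apply pow_le_pow_left₀ (pow_nonneg (hnn _ (mem N m hm2)) _) (ih m hm2)
        _ = F 0 ^ (2^(N+1) - k) * F 1 ^ k := by
            rw [mul_pow, ← pow_mul, ← pow_mul]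
            rw [show (2^N - m) * 2 = 2^(N+1) - k by omega, show m * 2 = k by omega]
    · -- k = 2m+1
      have hm2 : m + 1 ≤ 2^N := by omega
      have hm1 : m ≤ 2^N := by omega
      have hθ : (k:ℝ)/2^(N+1) = ((m:ℝ)/2^N + ((m:ℝ)+1)/2^N)/2 := by
        subst hm; push_cast; field_simp; ring
      rw [hθ]
      have hmem1 := mem N m hm1
      have hmem2 : ((m:ℝ)+1)/2^N ∈ Set.Icc (0:ℝ) 1 := by
        have := mem N (m+1) hm2; push_cast at this ⊢; exact this
      have hstep := hmid _ hmem1 _ hmem2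
      rw [show ∀ x:ℝ, x ^ (2^(N+1):ℕ) = (x ^ 2)^(2^N:ℕ) from fun x => by
        rw [← pow_mul, ← h2N]]
      have ih1 := ih m hm1
      have ih2' := ih (m+1) hm2
      have ih2 : F (((m:ℝ)+1)/2^N) ^ (2^N : ℕ) ≤ F 0 ^ (2^N - (m+1)) * F 1 ^ (m+1) := by
        have : ((m+1 : ℕ):ℝ) = (m:ℝ)+1 := by push_cast; ring
        rwa [this] at ih2'
      calc (F (((m:ℝ)/2^N + ((m:ℝ)+1)/2^N)/2) ^ 2) ^ (2^N : ℕ)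
          ≤ (F ((m:ℝ)/2^N) * F (((m:ℝ)+1)/2^N)) ^ (2^N : ℕ) :=
            pow_le_pow_left₀ (sq_nonneg _) hstep _
        _ = F ((m:ℝ)/2^N) ^ (2^N : ℕ) * F (((m:ℝ)+1)/2^N) ^ (2^N : ℕ) := mul_pow _ _ _
        _ ≤ (F 0 ^ (2^N - m) * F 1 ^ m) * (F 0 ^ (2^N - (m+1)) * F 1 ^ (m+1)) := by
            exact mul_le_mul ih1 ih2 (pow_nonneg (hnn _ hmem2) _)
              (mul_nonneg (pow_nonneg hF0 _) (pow_nonneg hF1 _))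
        _ = F 0 ^ (2^(N+1) - k) * F 1 ^ k := by
            rw [show (F 0 ^ (2^N - m) * F 1 ^ m) * (F 0 ^ (2^N - (m+1)) * F 1 ^ (m+1))
              = F 0 ^ ((2^N - m) + (2^N - (m+1))) * F 1 ^ (m + (m+1)) by
                rw [pow_add, pow_add]; ring]
            rw [show (2^N - m) + (2^N - (m+1)) = 2^(N+1) - k by omega,
              show m + (m+1) = k by omega]

lemma dyadic_rpow {F : ℝ → ℝ} (hnn : ∀ θ ∈ Set.Icc (0:ℝ) 1, 0 ≤ F θ)
    (hmid : ∀ θ₁ ∈ Set.Icc (0:ℝ) 1, ∀ θ₂ ∈ Set.Icc (0:ℝ) 1,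
      F ((θ₁+θ₂)/2) ^ 2 ≤ F θ₁ * F θ₂)
    (N k : ℕ) (hk : k ≤ 2 ^ N) :
    F ((k:ℝ)/2^N) ≤ F 0 ^ (1 - (k:ℝ)/2^N) * F 1 ^ ((k:ℝ)/2^N) := by
  have h01 : (0:ℝ) ∈ Set.Icc (0:ℝ) 1 := by norm_num
  have h11 : (1:ℝ) ∈ Set.Icc (0:ℝ) 1 := by norm_num
  have hF0 : 0 ≤ F 0 := hnn _ h01
  have hF1 : 0 ≤ F 1 := hnn _ h11
  have hθ : ((k:ℝ)/2^N) ∈ Set.Icc (0:ℝ) 1 := by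
    constructor
    · positivity
    · rw [div_le_one (by positivity)]; exact_mod_cast hk
  have key := dyadic_pow hnn hmid N k hk
  have hn0 : (2^N : ℕ) ≠ 0 := by positivity
  have h1 : F ((k:ℝ)/2^N) = (F ((k:ℝ)/2^N) ^ (2^N : ℕ)) ^ (((2^N : ℕ) : ℝ)⁻¹) :=
    (Real.pow_rpow_inv_natCast (hnn _ hθ) hn0).symm
  rw [h1]
  calc (F ((k:ℝ)/2^N) ^ (2^N : ℕ)) ^ (((2^N : ℕ):ℝ)⁻¹)
      ≤ ((F 0 ^ (2^N - k) * F 1 ^ k) : ℝ) ^ (((2^N : ℕ):ℝ)⁻¹) :=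
        Real.rpow_le_rpow (pow_nonneg (hnn _ hθ) _) key (by positivity)
    _ = F 0 ^ (1 - (k:ℝ)/2^N) * F 1 ^ ((k:ℝ)/2^N) := by
        rw [Real.mul_rpow (by positivity) (by positivity)]
        rw [← Real.rpow_natCast (F 0) (2^N - k), ← Real.rpow_natCast (F 1) k,
          ← Real.rpow_mul hF0, ← Real.rpow_mul hF1]
        congr 2
        · rw [Nat.cast_sub hk]
          push_cast
          field_simp
        · field_simp; norm_num

lemma interior_bound {F : ℝ → ℝ} (hnn : ∀ θ ∈ Set.Icc (0:ℝ) 1, 0 ≤ F θ)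
    (hmid : ∀ θ₁ ∈ Set.Icc (0:ℝ) 1, ∀ θ₂ ∈ Set.Icc (0:ℝ) 1,
      F ((θ₁+θ₂)/2) ^ 2 ≤ F θ₁ * F θ₂)
    {θ₀ : ℝ} (hθ₀ : θ₀ ∈ Set.Ioo (0:ℝ) 1) (hcont : ContinuousAt F θ₀) :
    F θ₀ ≤ F 0 ^ (1 - θ₀) * F 1 ^ θ₀ := by
  obtain ⟨hθ₀0, hθ₀1⟩ := hθ₀
  set θN : ℕ → ℝ := fun N => ((⌊θ₀ * 2^N⌋₊ : ℕ) : ℝ)/2^N with hθN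
  have hk : ∀ N : ℕ, ⌊θ₀ * 2^N⌋₊ ≤ 2^N := by
    intro N
    have h1 : θ₀ * 2^N ≤ ((2^N : ℕ) : ℝ) := by
      push_cast
      nlinarith [pow_pos (show (0:ℝ) < 2 by norm_num) N]
    have := Nat.floor_le_of_le h1
    simpa using this
  have hup : ∀ N, θN N ≤ θ₀ := by
    intro N
    rw [hθN]
    rw [div_le_iff₀ (by positivity)]
    exact Nat.floor_le (by positivity)
  have hlow : ∀ N, θ₀ - (2⁻¹ : ℝ)^N ≤ θN N := by
    intro N
    rw [hθN]
    rw [le_div_iff₀ (by positivity)]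
    have := Nat.sub_one_lt_floor (θ₀ * 2^N)
    have h2 : (θ₀ - (2⁻¹:ℝ)^N) * 2^N = θ₀ * 2^N - 1 := by
      rw [sub_mul]
      congr 1
      rw [← mul_pow]
      norm_num
    rw [h2]
    linarith
  have htend : Filter.Tendsto θN Filter.atTop (𝓝 θ₀) := by
    apply tendsto_of_tendsto_of_tendsto_of_le_of_le
      (g := fun N => θ₀ - (2⁻¹:ℝ)^N) (h := fun _ => θ₀) ?_ ?_ hlow hup
    · have h0 : Filter.Tendsto (fun N : ℕ => (2⁻¹:ℝ)^N) Filter.atTop (𝓝 0) :=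
        tendsto_pow_atTop_nhds_zero_of_lt_one (by norm_num) (by norm_num)
      simpa using tendsto_const_nhds.sub h0
    · exact tendsto_const_nhds
  have hbound : ∀ N, F (θN N) ≤ F 0 ^ (1 - θN N) * F 1 ^ (θN N) := fun N =>
    dyadic_rpow hnn hmid N _ (hk N)
  have hFtend : Filter.Tendsto (fun N => F (θN N)) Filter.atTop (𝓝 (F θ₀)) :=
    (hcont.tendsto).comp htend
  have hGcont : ContinuousAt (fun θ : ℝ => F 0 ^ (1-θ) * F 1 ^ θ) θ₀ := by
    apply ContinuousAt.mul
    · exact (Real.continuousAt_const_rpow' (by linarith : 1 - θ₀ ≠ 0)).comp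
        (continuousAt_const.sub continuousAt_id)
    · exact Real.continuousAt_const_rpow' (by linarith : θ₀ ≠ 0)
  have hGtend : Filter.Tendsto (fun N => F 0 ^ (1 - θN N) * F 1 ^ (θN N)) Filter.atTop
      (𝓝 (F 0 ^ (1-θ₀) * F 1 ^ θ₀)) := (hGcont.tendsto).comp htend
  exact le_of_tendsto_of_tendsto' hFtend hGtend hbound

end GenericReal

section CStar

variable {A : Type*} [CStarAlgebra A] [PartialOrder A] [StarOrderedRing A]

lemma phi_nonneg (φ : A →ₗ[ℂ] ℂ) (hφpos : ∀ a : A, 0 ≤ φ (star a * a))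
    {a : A} (ha : 0 ≤ a) : 0 ≤ φ a := by
  rw [StarOrderedRing.nonneg_iff] at ha
  induction ha using AddSubmonoid.closure_induction with
  | mem x hx => obtain ⟨s, rfl⟩ := hx; exact hφpos s
  | zero => simp
  | add x y _ _ hx hy => rw [map_add]; exact add_nonneg hx hy

lemma phi_im_eq_zero (φ : A →ₗ[ℂ] ℂ) (hφpos : ∀ a : A, 0 ≤ φ (star a * a))
    {a : A} (ha : IsSelfAdjoint a) : (φ a).im = 0 := by
  have h1 : 0 ≤ φ (a⁺) := phi_nonneg φ hφpos (CFC.posPart_nonneg a)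
  have h2 : 0 ≤ φ (a⁻) := phi_nonneg φ hφpos (CFC.negPart_nonneg a)
  have h3 : a⁺ - a⁻ = a := CFC.posPart_sub_negPart a ha
  rw [← h3, map_sub, Complex.sub_im]
  rw [Complex.le_def] at h1 h2
  simp [← h1.2, ← h2.2]

lemma phi_real (φ : A →ₗ[ℂ] ℂ) (hφpos : ∀ a : A, 0 ≤ φ (star a * a))
    {a : A} (ha : IsSelfAdjoint a) : φ a = ((φ a).re : ℂ) := by
  rw [Complex.ext_iff]
  simp [phi_im_eq_zero φ hφpos ha]

lemma exists_decomp (a : A) : ∃ x y : A, IsSelfAdjoint x ∧ IsSelfAdjoint y ∧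
    a = x + Complex.I • y ∧ star a = x - Complex.I • y ∧ ‖x‖ ≤ ‖a‖ ∧ ‖y‖ ≤ ‖a‖ := by
  refine ⟨(2⁻¹ : ℂ) • (a + star a), ((-2⁻¹ : ℂ) * Complex.I) • (a - star a), ?_, ?_, ?_, ?_, ?_, ?_⟩
  · simp [IsSelfAdjoint, star_smul, smul_add, add_comm, star_star,
      show star (2⁻¹ : ℂ) = (2⁻¹ : ℂ) by norm_num]
  · rw [IsSelfAdjoint, star_smul, star_sub, star_star]
    rw [show star ((-2⁻¹ : ℂ) * Complex.I) = (2⁻¹ : ℂ) * Complex.I by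
      simp [Complex.ext_iff]]
    match_scalars <;> (ring_nf; try norm_num [Complex.I_sq])
  · match_scalars <;> (ring_nf; try norm_num [Complex.I_sq])
  · match_scalars <;> (ring_nf; try norm_num [Complex.I_sq])
  · calc ‖(2⁻¹ : ℂ) • (a + star a)‖ ≤ ‖(2⁻¹ : ℂ)‖ * (‖a‖ + ‖star a‖) := by
          rw [norm_smul]; gcongr; exact norm_add_le _ _
    _ ≤ ‖a‖ := by
          rw [norm_star, show ‖(2⁻¹ : ℂ)‖ = 2⁻¹ by norm_num]
          linarith [norm_nonneg a]
  · calc ‖((-2⁻¹ : ℂ) * Complex.I) • (a - star a)‖ ≤ ‖((-2⁻¹ : ℂ) * Complex.I)‖ * (‖a‖ + ‖star a‖) := by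
          rw [norm_smul]; gcongr; exact norm_sub_le _ _
    _ ≤ ‖a‖ := by
          rw [norm_star, show ‖((-2⁻¹ : ℂ) * Complex.I)‖ = 2⁻¹ by
            rw [norm_mul, Complex.norm_I, mul_one]; norm_num]
          linarith [norm_nonneg a]

lemma phi_star (φ : A →ₗ[ℂ] ℂ) (hφpos : ∀ a : A, 0 ≤ φ (star a * a))
    (a : A) : φ (star a) = starRingEnd ℂ (φ a) := by
  obtain ⟨x, y, hxsa, hysa, ha1, ha2, -, -⟩ := exists_decomp a
  rw [show φ (star a) = φ x - Complex.I * φ y by rw [ha2]; simp,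
    show φ a = φ x + Complex.I * φ y by rw [ha1]; simp,
    phi_real φ hφpos hxsa, phi_real φ hφpos hysa]
  simp [Complex.ext_iff]

lemma phi_norm_le_sa (φ : A →ₗ[ℂ] ℂ) (hφpos : ∀ a : A, 0 ≤ φ (star a * a))
    {a : A} (ha : IsSelfAdjoint a) : ‖φ a‖ ≤ (φ 1).re * ‖a‖ := by
  have hmono : ∀ b c : A, b ≤ c → (φ b).re ≤ (φ c).re := by
    intro b c hbc
    have := phi_nonneg φ hφpos (sub_nonneg.mpr hbc)
    rw [Complex.le_def] at this
    have := this.1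
    rw [map_sub] at this
    simp only [Complex.sub_re, Complex.zero_re] at this
    linarith
  have key : ∀ b : A, IsSelfAdjoint b → (φ b).re ≤ (φ 1).re * ‖b‖ := by
    intro b hb
    have h1 : b ≤ algebraMap ℝ A ‖b‖ := IsSelfAdjoint.le_algebraMap_norm_self hb
    have h2 : φ (algebraMap ℝ A ‖b‖) = (‖b‖ : ℂ) * φ 1 := by
      rw [IsScalarTower.algebraMap_apply ℝ ℂ A, Algebra.algebraMap_eq_smul_one, map_smul]
      simp [smul_eq_mul]
    have := hmono _ _ h1
    rw [h2] at this
    calc (φ b).re ≤ ((‖b‖ : ℂ) * φ 1).re := this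
      _ = (φ 1).re * ‖b‖ := by simp [Complex.mul_re]; ring
  have hre := phi_real φ hφpos ha
  rw [hre]
  rw [Complex.norm_real, Real.norm_eq_abs]
  rcases abs_cases (φ a).re with ⟨h, -⟩ | ⟨h, -⟩
  · rw [h]; exact key a ha
  · rw [h]
    have := key (-a) ha.neg
    rw [map_neg, norm_neg] at this
    simpa using this

lemma phi_norm_le (φ : A →ₗ[ℂ] ℂ) (hφpos : ∀ a : A, 0 ≤ φ (star a * a))
    (a : A) : ‖φ a‖ ≤ 2 * (φ 1).re * ‖a‖ := by
  obtain ⟨x, y, hxsa, hysa, ha1, -, hx, hy⟩ := exists_decomp a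
  have h1 : φ a = φ x + Complex.I * φ y := by rw [ha1]; simp
  have hphi1 : 0 ≤ (φ 1).re := by
    have := phi_nonneg φ hφpos (zero_le_one (α := A))
    rw [Complex.le_def] at this; simpa using this.1
  calc ‖φ a‖ ≤ ‖φ x‖ + ‖Complex.I * φ y‖ := h1 ▸ norm_add_le _ _
    _ = ‖φ x‖ + ‖φ y‖ := by simp
    _ ≤ (φ 1).re * ‖x‖ + (φ 1).re * ‖y‖ :=
        add_le_add (phi_norm_le_sa φ hφpos hxsa) (phi_norm_le_sa φ hφpos hysa)
    _ ≤ (φ 1).re * ‖a‖ + (φ 1).re * ‖a‖ := by gcongr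
    _ = 2 * (φ 1).re * ‖a‖ := by ring


lemma phi_cs (φ : A →ₗ[ℂ] ℂ) (hφpos : ∀ a : A, 0 ≤ φ (star a * a))
    (a b : A) : ‖φ (star a * b)‖ ^ 2 ≤ (φ (star a * a)).re * (φ (star b * b)).re := by
  have hAsa : IsSelfAdjoint (star a * a) := by rw [IsSelfAdjoint, star_mul, star_star]
  have hBsa : IsSelfAdjoint (star b * b) := by rw [IsSelfAdjoint, star_mul, star_star]
  set α := φ (star a * b) with hα
  set Ar := (φ (star a * a)).re with hAr
  set Br := (φ (star b * b)).re with hBr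
  have hArnn : 0 ≤ Ar := by have := hφpos a; rw [Complex.le_def] at this; simpa [hAr] using this.1
  have hBrnn : 0 ≤ Br := by have := hφpos b; rw [Complex.le_def] at this; simpa [hBr] using this.1
  have hA : φ (star a * a) = (Ar : ℂ) := phi_real φ hφpos hAsa
  have hB : φ (star b * b) = (Br : ℂ) := phi_real φ hφpos hBsa
  have hba : φ (star b * a) = starRingEnd ℂ α := by
    rw [hα, ← phi_star φ hφpos (star a * b), star_mul, star_star]
  set nsq := Complex.normSq α with hnsq
  have hmc : α * starRingEnd ℂ α = (nsq : ℂ) := by rw [hnsq, ← Complex.mul_conj]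
  have hcm : starRingEnd ℂ α * α = (nsq : ℂ) := by
    rw [hnsq, Complex.normSq_eq_conj_mul_self]
  have key : ∀ t : ℝ, 0 ≤ t ^ 2 * nsq * Ar - 2 * t * nsq + Br := by
    intro t
    set c : ℂ := -(t : ℂ) * α with hc
    have hstarc : star c = -(t : ℂ) * starRingEnd ℂ α := by
      rw [hc]; simp [Complex.star_def, map_mul, Complex.conj_ofReal]
    have h := hφpos (c • a + b)
    have e1 : star (c • a + b) * (c • a + b)
        = (c * star c) • (star a * a) + (star c) • (star a * b)
          + c • (star b * a) + star b * b := by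
      rw [star_add, star_smul]
      simp only [add_mul, mul_add, smul_mul_assoc, mul_smul_comm, smul_add, smul_smul]
      abel
    rw [e1] at h
    simp only [map_add, map_smul, smul_eq_mul] at h
    rw [hA, hB, hba, ← hα] at h
    have e2 : c * star c * (Ar : ℂ) + star c * α + c * starRingEnd ℂ α + (Br : ℂ)
        = ((t ^ 2 * nsq * Ar - 2 * t * nsq + Br : ℝ) : ℂ) := by
      rw [hc, hstarc]
      push_cast
      linear_combination ((t:ℂ)^2 * (Ar:ℂ) - (t:ℂ)) * hcm - (t:ℂ) * hmc
    rw [e2] at h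
    rw [Complex.le_def] at h
    simpa only [Complex.ofReal_re, Complex.zero_re, Complex.zero_im] using h.1
  have hnorm : ‖α‖ ^ 2 = nsq := by
    rw [hnsq, Complex.sq_norm]
  by_cases hA0 : Ar = 0
  · have h1 : ∀ t : ℝ, 0 ≤ -2 * t * nsq + Br := by
      intro t; have := key t; rw [hA0] at this; nlinarith [this]
    have hnsq0 : nsq ≤ 0 := by
      by_contra hpos
      push_neg at hpos
      have h2 := h1 ((Br + 1) / (2 * nsq))
      have h3 : -2 * ((Br + 1) / (2 * nsq)) * nsq = -(Br + 1) := by field_simp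
      rw [h3] at h2
      linarith
    have : nsq = 0 := le_antisymm hnsq0 (Complex.normSq_nonneg α)
    rw [hnorm, this, hA0]
    positivity
  · have hApos : 0 < Ar := lt_of_le_of_ne hArnn (Ne.symm hA0)
    have hk := key (1 / Ar)
    rw [hnorm]
    have h2 : (1 / Ar) ^ 2 * nsq * Ar - 2 * (1 / Ar) * nsq + Br = Br - nsq / Ar := by
      field_simp; ring
    rw [h2] at hk
    have h4 : nsq / Ar ≤ Br := by linarith
    have := (div_le_iff₀ hApos).mp h4
    linarith [this]

lemma rpow_add_nonneg (a : A) (ha : 0 ≤ a) {u v : ℝ} (hu : 0 ≤ u) (hv : 0 ≤ v) :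
    CFC.rpow a (u + v) = CFC.rpow a u * CFC.rpow a v := by
  rcases eq_or_lt_of_le hu with rfl | hu'
  · rw [zero_add, show CFC.rpow a (0:ℝ) = 1 from CFC.rpow_zero a ha, one_mul]
  rcases eq_or_lt_of_le hv with rfl | hv'
  · rw [add_zero, show CFC.rpow a (0:ℝ) = 1 from CFC.rpow_zero a ha, mul_one]
  have hu'' : (0:ℝ≥0) < u.toNNReal := by simpa using hu'
  have hv'' : (0:ℝ≥0) < v.toNNReal := by simpa using hv'
  have h1 : CFC.rpow a u = CFC.nnrpow a u.toNNReal := by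
    have h := CFC.nnrpow_eq_rpow (a := a) hu''
    rw [Real.coe_toNNReal u hu] at h
    exact h.symm
  have h2 : CFC.rpow a v = CFC.nnrpow a v.toNNReal := by
    have h := CFC.nnrpow_eq_rpow (a := a) hv''
    rw [Real.coe_toNNReal v hv] at h
    exact h.symm
  have h3 : CFC.rpow a (u + v) = CFC.nnrpow a (u.toNNReal + v.toNNReal) := by
    have h := CFC.nnrpow_eq_rpow (a := a) (x := u.toNNReal + v.toNNReal) (by positivity)
    rw [NNReal.coe_add, Real.coe_toNNReal u hu, Real.coe_toNNReal v hv] at h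
    exact h.symm
  rw [h1, h2, h3]
  exact CFC.nnrpow_add hu'' hv''

lemma rpow_sa (a : A) (y : ℝ) : IsSelfAdjoint (CFC.rpow a y) :=
  IsSelfAdjoint.of_nonneg CFC.rpow_nonneg

lemma rpow_half_mul (a : A) (ha : 0 ≤ a) {m : ℝ} (hm : 0 ≤ m) :
    CFC.rpow a (m / 2) * CFC.rpow a (m / 2) = CFC.rpow a m := by
  rw [← rpow_add_nonneg a ha (by positivity) (by positivity)]
  norm_num

section mixed
variable (φ : A →ₗ[ℂ] ℂ) (hφpos : ∀ a : A, 0 ≤ φ (star a * a))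
  (hφtr : ∀ a b : A, φ (a * b) = φ (b * a))
include hφpos hφtr

omit hφpos in
/-- `φ (a^m * b^n) = φ (star c * c)` for `c = a^{m/2} b^{n/2}`. -/
lemma mixed_eq (a b : A) (ha : 0 ≤ a) (hb : 0 ≤ b) {m n : ℝ} (hm : 0 ≤ m) (hn : 0 ≤ n) :
    φ (CFC.rpow a m * CFC.rpow b n)
      = φ (star (CFC.rpow a (m/2) * CFC.rpow b (n/2)) * (CFC.rpow a (m/2) * CFC.rpow b (n/2))) := by
  rw [star_mul, (rpow_sa a (m/2)).star_eq, (rpow_sa b (n/2)).star_eq]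
  calc φ (CFC.rpow a m * CFC.rpow b n)
      = φ ((CFC.rpow a m * CFC.rpow b (n/2)) * CFC.rpow b (n/2)) := by
        rw [mul_assoc, rpow_half_mul b hb hn]
    _ = φ (CFC.rpow b (n/2) * (CFC.rpow a m * CFC.rpow b (n/2))) := hφtr _ _
    _ = φ (CFC.rpow b (n/2) * CFC.rpow a (m/2) * (CFC.rpow a (m/2) * CFC.rpow b (n/2))) := by
        rw [mul_assoc, ← mul_assoc (CFC.rpow a (m/2)), rpow_half_mul a ha hm]

lemma mixed_nonneg (a b : A) (ha : 0 ≤ a) (hb : 0 ≤ b) {m n : ℝ} (hm : 0 ≤ m) (hn : 0 ≤ n) :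
    0 ≤ φ (CFC.rpow a m * CFC.rpow b n) := by
  rw [mixed_eq φ hφtr a b ha hb hm hn]
  exact hφpos _

lemma mixed_re (a b : A) (ha : 0 ≤ a) (hb : 0 ≤ b) {m n : ℝ} (hm : 0 ≤ m) (hn : 0 ≤ n) :
    φ (CFC.rpow a m * CFC.rpow b n) = ((φ (CFC.rpow a m * CFC.rpow b n)).re : ℂ) := by
  have h := mixed_nonneg φ hφpos hφtr a b ha hb hm hn
  rw [Complex.le_def] at h
  have h2 : (φ (CFC.rpow a m * CFC.rpow b n)).im = 0 := by simpa using h.2.symm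
  rw [Complex.ext_iff]
  exact ⟨by simp, by simp only [Complex.ofReal_im]; exact h2⟩

/-- Midpoint log-convexity via Cauchy–Schwarz and the trace property. -/
lemma midpoint_ineq (a b : A) (ha : 0 ≤ a) (hb : 0 ≤ b)
    {u₁ u₂ v₁ v₂ : ℝ} (hu₁ : 0 ≤ u₁) (hu₂ : 0 ≤ u₂) (hv₁ : 0 ≤ v₁) (hv₂ : 0 ≤ v₂) :
    (φ (CFC.rpow a ((u₁ + u₂)/2) * CFC.rpow b ((v₁ + v₂)/2))).re ^ 2
      ≤ (φ (CFC.rpow a u₁ * CFC.rpow b v₁)).re * (φ (CFC.rpow a u₂ * CFC.rpow b v₂)).re := by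
  set X := CFC.rpow a (u₂/2) * CFC.rpow b (v₂/2) with hX
  set Y := CFC.rpow a (u₁/2) * CFC.rpow b (v₁/2) with hY
  have hXY : φ (star X * Y) = φ (CFC.rpow a ((u₁ + u₂)/2) * CFC.rpow b ((v₁ + v₂)/2)) := by
    rw [hX, hY, star_mul, (rpow_sa a (u₂/2)).star_eq, (rpow_sa b (v₂/2)).star_eq]
    calc φ (CFC.rpow b (v₂/2) * CFC.rpow a (u₂/2) * (CFC.rpow a (u₁/2) * CFC.rpow b (v₁/2)))
        = φ (CFC.rpow b (v₂/2) * (CFC.rpow a ((u₁+u₂)/2) * CFC.rpow b (v₁/2))) := by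
          rw [mul_assoc, ← mul_assoc (CFC.rpow a (u₂/2)),
            ← rpow_add_nonneg a ha (by positivity) (by positivity)]
          ring_nf
      _ = φ (CFC.rpow a ((u₁+u₂)/2) * CFC.rpow b (v₁/2) * CFC.rpow b (v₂/2)) := hφtr _ _
      _ = φ (CFC.rpow a ((u₁+u₂)/2) * CFC.rpow b ((v₁+v₂)/2)) := by
          rw [mul_assoc, ← rpow_add_nonneg b hb (by positivity) (by positivity)]
          ring_nf
  have hXX : φ (star X * X) = φ (CFC.rpow a u₂ * CFC.rpow b v₂) :=
    (mixed_eq φ hφtr a b ha hb hu₂ hv₂).symm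
  have hYY : φ (star Y * Y) = φ (CFC.rpow a u₁ * CFC.rpow b v₁) :=
    (mixed_eq φ hφtr a b ha hb hu₁ hv₁).symm
  have hcs := phi_cs φ hφpos X Y
  rw [hXY, hXX, hYY] at hcs
  have hmid : ‖φ (CFC.rpow a ((u₁ + u₂)/2) * CFC.rpow b ((v₁ + v₂)/2))‖
      = (φ (CFC.rpow a ((u₁ + u₂)/2) * CFC.rpow b ((v₁ + v₂)/2))).re := by
    rw [mixed_re φ hφpos hφtr a b ha hb (by positivity) (by positivity), Complex.norm_real,
      Real.norm_eq_abs, abs_of_nonneg]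
    · simp
    · have h := mixed_nonneg φ hφpos hφtr a b ha hb
        (m := (u₁+u₂)/2) (n := (v₁+v₂)/2) (by positivity) (by positivity)
      rw [Complex.le_def] at h
      simpa using h.1
  rw [hmid] at hcs
  rw [mul_comm] at hcs
  exact hcs
end mixed

lemma rpow_eq_cfc_real (a : A) (ha : 0 ≤ a) (t : ℝ) :
    CFC.rpow a t = cfc (fun x : ℝ => ((x.toNNReal ^ t : ℝ≥0) : ℝ)) a := by
  show cfc (fun x : ℝ≥0 => x ^ t) a = _
  exact cfc_nnreal_eq_real _ _ ha

lemma real_fun_continuous {t : ℝ} (ht : 0 < t) :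
    Continuous (fun x : ℝ => ((x.toNNReal ^ t : ℝ≥0) : ℝ)) :=
  NNReal.continuous_coe.comp ((NNReal.continuous_rpow_const ht.le).comp continuous_real_toNNReal)

lemma rpow_continuousAt (a : A) (ha : 0 ≤ a) {t₀ : ℝ} (ht₀ : 0 < t₀) :
    Filter.Tendsto (fun t => CFC.rpow a t) (𝓝 t₀) (𝓝 (CFC.rpow a t₀)) := by
  rw [Metric.tendsto_nhds_nhds]
  intro ε hε
  set M := ‖a‖ * ‖(1:A)‖ with hM
  set K : Set (ℝ × ℝ) := Set.Icc (0:ℝ) M ×ˢ Set.Icc (t₀/2) (t₀+1) with hK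
  have hKcomp : IsCompact K := isCompact_Icc.prod isCompact_Icc
  have hcont : ContinuousOn (fun p : ℝ × ℝ => p.1 ^ p.2) K := by
    intro p hp
    apply ContinuousAt.continuousWithinAt
    apply Real.continuousAt_rpow p
    right
    have := hp.2.1
    linarith
  have huc := hKcomp.uniformContinuousOn_of_continuous hcont
  rw [Metric.uniformContinuousOn_iff] at huc
  obtain ⟨δ, hδpos, hδ⟩ := huc (ε/2) (by linarith)
  refine ⟨min δ (min (t₀/2) 1), by positivity, ?_⟩
  intro t hdist
  rw [Real.dist_eq] at hdist
  have htδ : |t - t₀| < δ := lt_of_lt_of_le hdist (min_le_left _ _)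
  have ht2 : |t - t₀| < t₀/2 := lt_of_lt_of_le hdist
    (le_trans (min_le_right _ _) (min_le_left _ _))
  have ht1 : |t - t₀| < 1 := lt_of_lt_of_le hdist
    (le_trans (min_le_right _ _) (min_le_right _ _))
  rw [abs_lt] at ht2 ht1
  have htmem : t ∈ Set.Icc (t₀/2) (t₀+1) := by constructor <;> [linarith; linarith]
  have htpos : 0 < t := by have := htmem.1; linarith
  rw [dist_eq_norm, rpow_eq_cfc_real a ha t, rpow_eq_cfc_real a ha t₀,
    ← cfc_sub _ _ a ((real_fun_continuous htpos).continuousOn)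
      ((real_fun_continuous ht₀).continuousOn)]
  have hb : ‖cfc (fun x : ℝ => ((x.toNNReal ^ t : ℝ≥0) : ℝ) - ((x.toNNReal ^ t₀ : ℝ≥0) : ℝ)) a‖
      ≤ ε/2 := by
    apply norm_cfc_le (by linarith)
    intro x hx
    have hx0 : 0 ≤ x := spectrum_nonneg_of_nonneg ha hx
    have hxM : x ≤ M := le_trans (le_abs_self x) (spectrum.norm_le_norm_mul_of_mem hx)
    have hxv : ∀ s : ℝ, ((x.toNNReal ^ s : ℝ≥0) : ℝ) = x ^ s := by
      intro s
      rw [NNReal.coe_rpow, Real.coe_toNNReal x hx0]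
    rw [hxv, hxv]
    have hmem1 : ((x, t) : ℝ × ℝ) ∈ K := ⟨⟨hx0, hxM⟩, htmem⟩
    have hmem2 : ((x, t₀) : ℝ × ℝ) ∈ K := ⟨⟨hx0, hxM⟩, by constructor <;> linarith⟩
    have hd : dist ((x, t) : ℝ × ℝ) ((x, t₀) : ℝ × ℝ) < δ := by
      rw [Prod.dist_eq]
      simp only [dist_self, Real.dist_eq]
      rw [sup_eq_right.mpr (abs_nonneg (t - t₀))]
      exact htδ
    have := hδ _ hmem1 _ hmem2 hd
    rw [Real.dist_eq] at this
    rw [Real.norm_eq_abs]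
    exact this.le
  exact lt_of_le_of_lt hb (by linarith)

lemma hoelder (φ : A →ₗ[ℂ] ℂ) (hφpos : ∀ a : A, 0 ≤ φ (star a * a))
    (hφtr : ∀ a b : A, φ (a * b) = φ (b * a))
    {p : ℝ} (hp : 2 < p) (a b : A) (ha : 0 ≤ a) (hb : 0 ≤ b) :
    (φ (a * b)).re ≤ (φ (CFC.rpow a (p/2))).re ^ (2/p)
      * (φ (CFC.rpow b (p/(p-2)))).re ^ ((p-2)/p) := by
  have hp0 : (0:ℝ) < p := by linarith
  set r : ℝ := p/2 with hr
  set s : ℝ := p/(p-2) with hs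
  have hrpos : 0 < r := by rw [hr]; positivity
  have hspos : 0 < s := by rw [hs]; exact div_pos hp0 (by linarith)
  set F : ℝ → ℝ := fun θ => (φ (CFC.rpow a (r*θ) * CFC.rpow b (s*(1-θ)))).re with hF
  have hnn : ∀ θ ∈ Set.Icc (0:ℝ) 1, 0 ≤ F θ := by
    intro θ hθ
    have h := mixed_nonneg φ hφpos hφtr a b ha hb (m := r*θ) (n := s*(1-θ))
      (mul_nonneg hrpos.le hθ.1) (mul_nonneg hspos.le (by linarith [hθ.2]))
    rw [Complex.le_def] at h
    simpa [hF] using h.1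
  have hmid : ∀ θ₁ ∈ Set.Icc (0:ℝ) 1, ∀ θ₂ ∈ Set.Icc (0:ℝ) 1,
      F ((θ₁+θ₂)/2) ^ 2 ≤ F θ₁ * F θ₂ := by
    intro θ₁ h₁ θ₂ h₂
    have h := midpoint_ineq φ hφpos hφtr a b ha hb
      (u₁ := r*θ₁) (u₂ := r*θ₂) (v₁ := s*(1-θ₁)) (v₂ := s*(1-θ₂))
      (mul_nonneg hrpos.le h₁.1) (mul_nonneg hrpos.le h₂.1)
      (mul_nonneg hspos.le (by linarith [h₁.2])) (mul_nonneg hspos.le (by linarith [h₂.2]))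
    rw [show (r*θ₁ + r*θ₂)/2 = r*((θ₁+θ₂)/2) by ring,
      show (s*(1-θ₁) + s*(1-θ₂))/2 = s*(1-(θ₁+θ₂)/2) by ring] at h
    exact h
  set θ₀ : ℝ := 2/p with hθ₀def
  have hθ₀mem : θ₀ ∈ Set.Ioo (0:ℝ) 1 := by
    constructor
    · positivity
    · rw [hθ₀def, div_lt_one hp0]; linarith
  have hrθ₀ : r * θ₀ = 1 := by rw [hr, hθ₀def]; field_simp
  have hsθ₀ : s * (1 - θ₀) = 1 := by
    have hp2 : p - 2 ≠ 0 := by linarith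
    have hpne : p ≠ 0 := by linarith
    have h1 : (1:ℝ) - 2/p = (p-2)/p := by field_simp
    rw [hs, hθ₀def, h1, div_mul_div_comm, div_eq_one_iff_eq (by positivity)]
    ring
  have hφcont : Continuous φ :=
    AddMonoidHomClass.continuous_of_bound φ (2 * (φ 1).re) (phi_norm_le φ hφpos)
  have hcont : ContinuousAt F θ₀ := by
    have h1 : ContinuousAt (fun θ : ℝ => CFC.rpow a (r*θ)) θ₀ :=
      (rpow_continuousAt a ha (by rw [hrθ₀]; norm_num : (0:ℝ) < r * θ₀)).comp
        ((continuousAt_const.mul continuousAt_id))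
    have h2 : ContinuousAt (fun θ : ℝ => CFC.rpow b (s*(1-θ))) θ₀ :=
      (rpow_continuousAt b hb (by rw [hsθ₀]; norm_num : (0:ℝ) < s * (1-θ₀))).comp
        ((continuousAt_const.mul (continuousAt_const.sub continuousAt_id)))
    exact (Complex.continuous_re.continuousAt).comp
      (hφcont.continuousAt.comp (h1.mul h2))
  have key := interior_bound hnn hmid hθ₀mem hcont
  have hFθ₀ : F θ₀ = (φ (a * b)).re := by
    rw [hF]
    simp only
    rw [hrθ₀, hsθ₀, show CFC.rpow a (1:ℝ) = a from CFC.rpow_one a ha,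
      show CFC.rpow b (1:ℝ) = b from CFC.rpow_one b hb]
  have hF1 : F 1 = (φ (CFC.rpow a (p/2))).re := by
    rw [hF]
    simp only [mul_one, sub_self, mul_zero]
    rw [show CFC.rpow b (0:ℝ) = 1 from CFC.rpow_zero b hb, mul_one, ← hr]
  have hF0 : F 0 = (φ (CFC.rpow b (p/(p-2)))).re := by
    rw [hF]
    simp only [mul_zero, sub_zero, mul_one]
    rw [show CFC.rpow a (0:ℝ) = 1 from CFC.rpow_zero a ha, one_mul, ← hs]
  rw [hFθ₀, hF1, hF0] at key
  calc (φ (a*b)).re ≤ (φ (CFC.rpow b (p/(p-2)))).re ^ (1 - θ₀)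
        * (φ (CFC.rpow a (p/2))).re ^ θ₀ := key
    _ = (φ (CFC.rpow a (p/2))).re ^ (2/p) * (φ (CFC.rpow b (p/(p-2)))).re ^ ((p-2)/p) := by
        rw [hθ₀def, show 1 - 2/p = (p-2)/p by field_simp]
        ring

end CStar

/-- Hölder-type inequality: for a unital C*-algebra `A`, a positive
tracial linear functional `φ`, a real number `p > 2` and `0 ≤ W ∈ A`, for all `x, y ∈ A`,
`|φ(x W y*)| ≤ φ(|x|^p)^{1/p} · φ(|y|^p)^{1/p} · φ(W^{p/(p-2)})^{(p-2)/p}`,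
the quantities `φ(|x|^p)`, `φ(|y|^p)`, `φ(W^{p/(p-2)})` being nonnegative reals.
In particular, if `φ(W^{p/(p-2)}) ≤ 1` then
`|φ(x W y*)| ≤ φ(|x|^p)^{1/p} · φ(|y|^p)^{1/p}`.
Here `|x|^p = (x* x)^{p/2}` is defined via the continuous functional calculus. -/
theorem statement2 {A : Type*} [CStarAlgebra A] [PartialOrder A] [StarOrderedRing A]
    (φ : A →ₗ[ℂ] ℂ)
    (hφpos : ∀ a : A, 0 ≤ φ (star a * a))
    (hφtr : ∀ a b : A, φ (a * b) = φ (b * a))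
    (p : ℝ) (hp : 2 < p)
    (W : A) (hW : 0 ≤ W) :
    (∀ x : A, 0 ≤ φ (CFC.rpow (star x * x) (p / 2))) ∧
    (0 ≤ φ (CFC.rpow W (p / (p - 2)))) ∧
    (∀ x y : A,
      ‖φ (x * W * star y)‖ ≤
        (φ (CFC.rpow (star x * x) (p / 2))).re ^ (1 / p) *
        (φ (CFC.rpow (star y * y) (p / 2))).re ^ (1 / p) *
        (φ (CFC.rpow W (p / (p - 2)))).re ^ ((p - 2) / p)) ∧
    ((φ (CFC.rpow W (p / (p - 2)))).re ≤ 1 →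
      ∀ x y : A,
        ‖φ (x * W * star y)‖ ≤
          (φ (CFC.rpow (star x * x) (p / 2))).re ^ (1 / p) *
          (φ (CFC.rpow (star y * y) (p / 2))).re ^ (1 / p)) := by
  have hp0 : (0:ℝ) < p := by linarith
  have part1 : ∀ x : A, 0 ≤ φ (CFC.rpow (star x * x) (p / 2)) := fun x =>
    phi_nonneg φ hφpos CFC.rpow_nonneg
  have part2 : 0 ≤ φ (CFC.rpow W (p / (p - 2))) := phi_nonneg φ hφpos CFC.rpow_nonneg
  -- notation
  set Q : ℝ := (φ (CFC.rpow W (p / (p - 2)))).re with hQ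
  have hQnn : 0 ≤ Q := by rw [Complex.le_def] at part2; simpa [hQ] using part2.1
  have hPnn : ∀ x : A, 0 ≤ (φ (CFC.rpow (star x * x) (p / 2))).re := by
    intro x; have := part1 x; rw [Complex.le_def] at this; simpa using this.1
  have part3 : ∀ x y : A,
      ‖φ (x * W * star y)‖ ≤
        (φ (CFC.rpow (star x * x) (p / 2))).re ^ (1 / p) *
        (φ (CFC.rpow (star y * y) (p / 2))).re ^ (1 / p) * Q ^ ((p - 2) / p) := by
    intro x y
    set Px : ℝ := (φ (CFC.rpow (star x * x) (p / 2))).re with hPx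
    set Py : ℝ := (φ (CFC.rpow (star y * y) (p / 2))).re with hPy
    set w : A := CFC.rpow W ((1:ℝ)/2) with hw
    have hww : w * w = W := by
      rw [hw]
      have := rpow_half_mul W hW (m := 1) (by norm_num)
      rw [show CFC.rpow W (1:ℝ) = W from CFC.rpow_one W hW] at this
      simpa using this
    have hwsa : IsSelfAdjoint w := rpow_sa W _
    -- weighted Cauchy-Schwarz
    have hCS := phi_cs φ hφpos (w * star x) (w * star y)
    have e1 : star (w * star x) * (w * star y) = x * W * star y := by
      rw [star_mul, star_star, hwsa.star_eq, mul_assoc, ← mul_assoc w, hww, ← mul_assoc]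
    have e2 : star (w * star x) * (w * star x) = x * W * star x := by
      rw [star_mul, star_star, hwsa.star_eq, mul_assoc, ← mul_assoc w, hww, ← mul_assoc]
    have e3 : star (w * star y) * (w * star y) = y * W * star y := by
      rw [star_mul, star_star, hwsa.star_eq, mul_assoc, ← mul_assoc w, hww, ← mul_assoc]
    rw [e1, e2, e3] at hCS
    -- trace rearrangement
    have tr : ∀ z : A, φ (z * W * star z) = φ ((star z * z) * W) := by
      intro z
      rw [hφtr (z * W) (star z), ← mul_assoc]
    -- Hölder for each factor
    have hHx := hoelder φ hφpos hφtr hp (star x * x) W (star_mul_self_nonneg x) hW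
    have hHy := hoelder φ hφpos hφtr hp (star y * y) W (star_mul_self_nonneg y) hW
    rw [tr x, tr y] at hCS
    have hbound : ‖φ (x * W * star y)‖ ^ 2
        ≤ (Px ^ ((2:ℝ)/p) * Q ^ ((p-2)/p)) * (Py ^ ((2:ℝ)/p) * Q ^ ((p-2)/p)) := by
      refine hCS.trans (mul_le_mul hHx hHy ?_ ?_)
      · have h := mixed_nonneg φ hφpos hφtr (star y * y) W (star_mul_self_nonneg y) hW
          (m := 1) (n := 1) (by norm_num) (by norm_num)
        rw [show CFC.rpow (star y * y) (1:ℝ) = star y * y from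
            CFC.rpow_one _ (star_mul_self_nonneg y),
          show CFC.rpow W (1:ℝ) = W from CFC.rpow_one W hW] at h
        rw [Complex.le_def] at h
        simpa using h.1
      · exact mul_nonneg (Real.rpow_nonneg (hPnn x) _) (Real.rpow_nonneg hQnn _)
    set R : ℝ := Px ^ ((1:ℝ)/p) * Py ^ ((1:ℝ)/p) * Q ^ ((p-2)/p) with hR
    have hRnn : 0 ≤ R := by
      rw [hR]
      exact mul_nonneg (mul_nonneg (Real.rpow_nonneg (hPnn x) _)
        (Real.rpow_nonneg (hPnn y) _)) (Real.rpow_nonneg hQnn _)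
    have hne : (1:ℝ)/p + 1/p ≠ 0 := by positivity
    have ex : Px ^ ((2:ℝ)/p) = Px ^ ((1:ℝ)/p) * Px ^ ((1:ℝ)/p) := by
      rw [show (2:ℝ)/p = 1/p + 1/p by ring, Real.rpow_add' (hPnn x) hne]
    have ey : Py ^ ((2:ℝ)/p) = Py ^ ((1:ℝ)/p) * Py ^ ((1:ℝ)/p) := by
      rw [show (2:ℝ)/p = 1/p + 1/p by ring, Real.rpow_add' (hPnn y) hne]
    have hR2 : (Px ^ ((2:ℝ)/p) * Q ^ ((p-2)/p)) * (Py ^ ((2:ℝ)/p) * Q ^ ((p-2)/p)) = R^2 := by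
      rw [hR, ex, ey]; ring
    calc ‖φ (x * W * star y)‖ = Real.sqrt (‖φ (x * W * star y)‖^2) :=
          (Real.sqrt_sq (norm_nonneg _)).symm
      _ ≤ Real.sqrt (R^2) := Real.sqrt_le_sqrt (hR2 ▸ hbound)
      _ = R := Real.sqrt_sq hRnn
  refine ⟨part1, part2, part3, ?_⟩
  intro hQ1 x y
  have h := part3 x y
  have hexp : (0:ℝ) ≤ (p-2)/p := div_nonneg (by linarith) (by linarith)
  calc ‖φ (x * W * star y)‖ ≤ _ * Q ^ ((p - 2) / p) := h
    _ ≤ (φ (CFC.rpow (star x * x) (p / 2))).re ^ (1 / p) *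
        (φ (CFC.rpow (star y * y) (p / 2))).re ^ (1 / p) := by
        apply mul_le_of_le_one_right
          (mul_nonneg (Real.rpow_nonneg (hPnn x) _) (Real.rpow_nonneg (hPnn y) _))
        exact Real.rpow_le_one hQnn hQ1 hexp
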